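/- Every finitely generated commutative ℂ-algebra that is a local ring is Artinian. -/

import Mathlib

theorem stmt8 (A : Type*) [CommRing A] [Algebra ℂ A] [Algebra.FiniteType ℂ A]
    [IsLocalRing A] : IsArtinianRing A := by
  have hJ : IsJacobsonRing A := isJacobsonRing_of_finiteType (A := ℂ)
  -- the maximal ideal equals the nilradical
  have hm : IsLocalRing.maximalIdeal A = nilradical A := by
    rw [nilradical, Ideal.radical_eq_jacobson]
    exact (IsLocalRing.jacobson_eq_maximalIdeal ⊥ bot_ne_top).symm
  -- the residue field is finite over ℂ
  haveI : IsScalarTower ℂ A (IsLocalRing.ResidueField A) :=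
    IsScalarTower.of_algebraMap_eq fun c => rfl
  have hft : Algebra.FiniteType ℂ (IsLocalRing.ResidueField A) :=
    Algebra.FiniteType.of_surjective (IsScalarTower.toAlgHom ℂ A _)
      Ideal.Quotient.mk_surjective
  have hres : Module.Finite ℂ (IsLocalRing.ResidueField A) :=
    finite_of_finite_type_of_isJacobsonRing ℂ _
  have hsurj : Function.Surjective (algebraMap ℂ (IsLocalRing.ResidueField A)) := by
    have : Algebra.IsIntegral ℂ (IsLocalRing.ResidueField A) := Algebra.IsIntegral.of_finite _ _
    exact IsAlgClosed.algebraMap_bijective_of_isIntegral.2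
  -- every element of A is integral over ℂ
  have hint : Algebra.IsIntegral ℂ A := by
    constructor
    intro a
    obtain ⟨c, hc⟩ := hsurj (IsLocalRing.residue A a)
    have hx : a - algebraMap ℂ A c ∈ IsLocalRing.maximalIdeal A := by
      have h0 : IsLocalRing.residue A (a - algebraMap ℂ A c) = 0 := by
        rw [map_sub, sub_eq_zero, ← hc, IsScalarTower.algebraMap_apply ℂ A]
        rfl
      exact Ideal.Quotient.eq_zero_iff_mem.mp h0
    rw [hm, mem_nilradical] at hx
    obtain ⟨k, hk⟩ := hx
    refine ⟨(Polynomial.X - Polynomial.C c) ^ k, (Polynomial.monic_X_sub_C c).pow k, ?_⟩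
    simpa using hk
  have : Module.Finite ℂ A := Algebra.IsIntegral.finite
  exact IsArtinianRing.of_finite ℂ A
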